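/- For all x > 0, 2·arctan(1+2x) − π/2 < √2·arctan(x√2); equivalently M_2(a,b) < M_3(a,b) for positive a ≠ b, where M_2(a,b) = (b−a)/(√2·arctan((ln b − ln a)/√2)) and M_3(a,b) = |b−a|/(2·arctan(1+|ln b − ln a|) − π/2). -/

import Mathlib

open Real

private noncomputable def fAux : ℝ → ℝ :=
  fun x => Real.sqrt 2 * Real.arctan (x * Real.sqrt 2) - 2 * Real.arctan (1 + 2 * x)

private lemma fAux_hasDerivAt (y : ℝ) :
    HasDerivAt fAux (2 / (1 + 2 * y ^ 2) - 4 / (1 + (1 + 2 * y) ^ 2)) y := by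
  have s2 : Real.sqrt 2 * Real.sqrt 2 = 2 := Real.mul_self_sqrt (by norm_num)
  have h1 : HasDerivAt (fun y : ℝ => Real.arctan (y * Real.sqrt 2))
      ((1 / (1 + (y * Real.sqrt 2) ^ 2)) * Real.sqrt 2) y := by
    refine ((Real.hasDerivAt_arctan (y * Real.sqrt 2)).comp y
      ((hasDerivAt_id y).mul_const (Real.sqrt 2))).congr_deriv ?_
    simp
  have h2 : HasDerivAt (fun y : ℝ => Real.arctan (1 + 2 * y))
      ((1 / (1 + (1 + 2 * y) ^ 2)) * 2) y := by
    have hlin : HasDerivAt (fun y : ℝ => 1 + 2 * y) 2 y := by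
      simpa using ((hasDerivAt_id y).const_mul (2:ℝ)).const_add 1
    exact (Real.hasDerivAt_arctan (1 + 2 * y)).comp y hlin
  have hsq : (y * Real.sqrt 2) ^ 2 = 2 * y ^ 2 := by
    rw [mul_pow, Real.sq_sqrt (by norm_num : (0:ℝ) ≤ 2)]; ring
  have := (h1.const_mul (Real.sqrt 2)).sub (h2.const_mul 2)
  rw [hsq] at this
  refine this.congr_deriv ?_
  have e1 : Real.sqrt 2 * (1 / (1 + 2 * y ^ 2) * Real.sqrt 2) = 2 / (1 + 2 * y ^ 2) := by
    rw [mul_comm (1 / (1 + 2 * y ^ 2)) (Real.sqrt 2), ← mul_assoc, s2, mul_one_div]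
  rw [e1, mul_comm (1 / (1 + (1 + 2 * y) ^ 2)) 2, ← mul_assoc, mul_one_div]
  norm_num

private lemma key (x : ℝ) (hx : 0 < x) :
    2 * Real.arctan (1 + 2 * x) - Real.pi / 2 < Real.sqrt 2 * Real.arctan (x * Real.sqrt 2) := by
  have hmono : StrictMonoOn fAux (Set.Ici (0:ℝ)) := by
    apply strictMonoOn_of_deriv_pos (convex_Ici 0)
    · exact fun y _ => ((fAux_hasDerivAt y).differentiableAt.continuousAt).continuousWithinAt
    · intro y hy
      rw [interior_Ici] at hy
      rw [(fAux_hasDerivAt y).deriv]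
      have h1 : (0:ℝ) < 1 + 2 * y ^ 2 := by positivity
      have h2 : (0:ℝ) < 1 + (1 + 2 * y) ^ 2 := by positivity
      rw [sub_pos, div_lt_div_iff₀ h2 h1]
      nlinarith [Set.mem_Ioi.mp hy, sq_nonneg y]
  have h0 : fAux 0 = -(Real.pi / 2) := by
    simp [fAux, Real.arctan_one]
    ring
  have := hmono (Set.self_mem_Ici) (Set.mem_Ici.mpr hx.le) hx
  rw [h0] at this
  unfold fAux at this
  linarith

theorem stmt_12 :
    (∀ x : ℝ, 0 < x →
      2 * Real.arctan (1 + 2 * x) - Real.pi / 2 < Real.sqrt 2 * Real.arctan (x * Real.sqrt 2)) ∧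
    (∀ a b : ℝ, 0 < a → 0 < b → a ≠ b →
      (b - a) / (Real.sqrt 2 * Real.arctan ((Real.log b - Real.log a) / Real.sqrt 2)) <
        |b - a| / (2 * Real.arctan (1 + |Real.log b - Real.log a|) - Real.pi / 2)) := by
  constructor
  · exact key
  · intro a b ha hb hab
    set t := |Real.log b - Real.log a| with htdef
    have hlogne : Real.log b ≠ Real.log a := fun h => hab (Real.log_injOn_pos
      (Set.mem_Ioi.mpr hb) (Set.mem_Ioi.mpr ha) h).symm
    have ht : 0 < t := abs_pos.mpr (sub_ne_zero.mpr hlogne)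
    have s2pos : (0:ℝ) < Real.sqrt 2 := by positivity
    have s2 : Real.sqrt 2 * Real.sqrt 2 = 2 := Real.mul_self_sqrt (by norm_num)
    -- rewrite LHS
    have hLHS : (b - a) / (Real.sqrt 2 * Real.arctan ((Real.log b - Real.log a) / Real.sqrt 2))
        = |b - a| / (Real.sqrt 2 * Real.arctan (t / Real.sqrt 2)) := by
      rcases lt_or_gt_of_ne hab with h | h
      · have hlog : Real.log a < Real.log b := Real.log_lt_log ha h
        have h1 : t = Real.log b - Real.log a := abs_of_pos (by linarith)
        have h2 : |b - a| = b - a := abs_of_pos (by linarith)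
        rw [h1, h2]
      · have hlog : Real.log b < Real.log a := Real.log_lt_log hb h
        have h1 : t = -(Real.log b - Real.log a) := abs_of_neg (by linarith)
        have h2 : |b - a| = -(b - a) := abs_of_neg (by linarith)
        rw [h1, h2, show (-(Real.log b - Real.log a))/Real.sqrt 2 = -((Real.log b - Real.log a)/Real.sqrt 2) from neg_div _ _, Real.arctan_neg, mul_neg,
          neg_div_neg_eq]
    rw [hLHS]
    have hk := key (t / 2) (by linarith)
    have e1 : 1 + 2 * (t / 2) = 1 + t := by ring
    have e2 : (t / 2) * Real.sqrt 2 = t / Real.sqrt 2 := by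
      field_simp
      nlinarith [s2]
    rw [e1, e2] at hk
    have hd1 : 0 < 2 * Real.arctan (1 + t) - Real.pi / 2 := by
      have : Real.arctan 1 < Real.arctan (1 + t) := Real.arctan_strictMono (by linarith)
      rw [Real.arctan_one] at this
      linarith
    have habs : 0 < |b - a| := abs_pos.mpr (sub_ne_zero.mpr (fun h => hab (by linarith)))
    exact div_lt_div_of_pos_left habs hd1 hk
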